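/- Under the assumption that X₀,…,X_{n-1} are i.i.d. complex random variables with |X_i| = 1, the median m_n and expected value of the crest factor CF_n(s) of an OFDM signal with n sub-carriers differ by at most 8√π, uniformly in n. -/

import Mathlib

open MeasureTheory Finset

noncomputable def ofdm (n : ℕ) (T : ℝ) (x : Fin n → ℂ) (t : ℝ) : ℂ :=
  ((Real.sqrt n : ℝ) : ℂ)⁻¹ *
    ∑ i : Fin n, x i * Complex.exp (Complex.I * ((2 * Real.pi * (i : ℕ) * t / T : ℝ) : ℂ))

noncomputable def crest (n : ℕ) (T : ℝ) (x : Fin n → ℂ) : ℝ :=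
  sSup ((fun t => ‖ofdm n T x t‖) '' Set.Icc (0 : ℝ) T)

lemma ofdm_norm_le (n : ℕ) (T : ℝ) (x : Fin n → ℂ) (t : ℝ) :
    ‖ofdm n T x t‖ ≤ (Real.sqrt n)⁻¹ * ∑ i : Fin n, ‖x i‖ := by
  rw [ofdm, norm_mul]
  gcongr
  · simp [abs_of_nonneg (Real.sqrt_nonneg (n:ℝ))]
  · refine (norm_sum_le _ _).trans_eq ?_
    congr 1; funext i
    rw [norm_mul, Complex.norm_exp]
    simp

lemma ofdm_sub (n : ℕ) (T : ℝ) (x y : Fin n → ℂ) (t : ℝ) :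
    ofdm n T x t - ofdm n T y t = ofdm n T (x - y) t := by
  simp [ofdm, ← mul_sub, ← Finset.sum_sub_distrib, sub_mul]

lemma crest_nonneg (n : ℕ) (T : ℝ) (x : Fin n → ℂ) : 0 ≤ crest n T x := by
  apply Real.sSup_nonneg
  rintro y ⟨t, -, rfl⟩; exact norm_nonneg _

lemma crest_le (n : ℕ) (T : ℝ) (x : Fin n → ℂ) :
    crest n T x ≤ (Real.sqrt n)⁻¹ * ∑ i : Fin n, ‖x i‖ := by
  apply Real.sSup_le
  · rintro y ⟨t, -, rfl⟩; exact ofdm_norm_le n T x t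
  · positivity

lemma crest_bddAbove (n : ℕ) (T : ℝ) (x : Fin n → ℂ) :
    BddAbove ((fun t => ‖ofdm n T x t‖) '' Set.Icc (0 : ℝ) T) := by
  refine ⟨(Real.sqrt n)⁻¹ * ∑ i : Fin n, ‖x i‖, ?_⟩
  rintro y ⟨t, -, rfl⟩; exact ofdm_norm_le n T x t

lemma crest_lipschitz (n : ℕ) (T : ℝ) (x y : Fin n → ℂ) :
    |crest n T x - crest n T y| ≤ (Real.sqrt n)⁻¹ * ∑ i : Fin n, ‖x i - y i‖ := by
  have key : ∀ u v : Fin n → ℂ,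
      crest n T u ≤ crest n T v + (Real.sqrt n)⁻¹ * ∑ i : Fin n, ‖u i - v i‖ := by
    intro u v
    apply Real.sSup_le
    · rintro z ⟨t, ht, rfl⟩
      have h1 : ‖ofdm n T u t‖ ≤ ‖ofdm n T v t‖ + ‖ofdm n T u t - ofdm n T v t‖ := by
        calc ‖ofdm n T u t‖ = ‖ofdm n T v t + (ofdm n T u t - ofdm n T v t)‖ := by ring_nf
          _ ≤ _ := norm_add_le _ _
      have h2 : ‖ofdm n T u t - ofdm n T v t‖ ≤ (Real.sqrt n)⁻¹ * ∑ i : Fin n, ‖u i - v i‖ := by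
        rw [ofdm_sub]; exact ofdm_norm_le n T _ t
      have h3 : ‖ofdm n T v t‖ ≤ crest n T v :=
        le_csSup (crest_bddAbove n T v) ⟨t, ht, rfl⟩
      linarith
    · have := crest_nonneg n T v; positivity
  rw [abs_sub_le_iff]
  constructor
  · have := key x y; linarith
  · have h := key y x
    have : ∑ i : Fin n, ‖y i - x i‖ = ∑ i : Fin n, ‖x i - y i‖ := by
      congr 1; funext i; exact norm_sub_rev _ _
    linarith [h, this ▸ h]

lemma crest_continuous (n : ℕ) (T : ℝ) : Continuous (crest n T) := by
  rcases Nat.eq_zero_or_pos n with rfl | hn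
  · have : crest 0 T = fun _ => crest 0 T default := by
      funext x; rw [Subsingleton.elim x default]
    rw [this]; exact continuous_const
  · apply Metric.continuous_iff.2
    intro x ε hε
    refine ⟨ε / ((Real.sqrt n)⁻¹ * n + 1), by positivity, fun y hy => ?_⟩
    rw [Real.dist_eq]
    calc |crest n T y - crest n T x| ≤ (Real.sqrt n)⁻¹ * ∑ i : Fin n, ‖y i - x i‖ :=
          crest_lipschitz n T y x
      _ ≤ (Real.sqrt n)⁻¹ * ∑ _i : Fin n, dist y x := by
          have hpos : (0:ℝ) ≤ (Real.sqrt n)⁻¹ := by positivity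
          apply mul_le_mul_of_nonneg_left _ hpos
          apply Finset.sum_le_sum
          intro i _
          exact (dist_le_pi_dist y x i).trans_eq' (by rw [Complex.dist_eq])
      _ = (Real.sqrt n)⁻¹ * n * dist y x := by simp [Finset.sum_const]; ring
      _ < ε := by
          have h2 : (0:ℝ) < (Real.sqrt n)⁻¹ * n + 1 := by positivity
          calc (Real.sqrt n)⁻¹ * n * dist y x ≤ ((Real.sqrt n)⁻¹ * n + 1) * dist y x := by
                have := dist_nonneg (x := y) (y := x); nlinarith
            _ < ((Real.sqrt n)⁻¹ * n + 1) * (ε / ((Real.sqrt n)⁻¹ * n + 1)) := by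
                apply mul_lt_mul_of_pos_left hy h2
            _ = ε := by field_simp

lemma integrable_of_bdd {α : Type*} [MeasurableSpace α] (P : Measure α) [IsFiniteMeasure P]
    {f : α → ℝ} (hf : Measurable f) (B : ℝ) (hB : ∀ x, |f x| ≤ B) : Integrable f P :=
  ⟨hf.aestronglyMeasurable, HasFiniteIntegral.of_bounded (C := B)
    (Filter.Eventually.of_forall (fun x => by simpa using hB x))⟩

lemma pi_var_le : ∀ (n : ℕ) (ν : Fin n → Measure ℂ), (∀ i, IsProbabilityMeasure (ν i)) →
    ∀ (f : (Fin n → ℂ) → ℝ), Measurable f → ∀ (B : ℝ), (∀ x, |f x| ≤ B) →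
    ∀ (c : ℝ), 0 ≤ c →
    (∀ (x : Fin n → ℂ) (i : Fin n) (a b : ℂ),
      |f (Function.update x i a) - f (Function.update x i b)| ≤ c) →
    ∫ x, (f x)^2 ∂(Measure.pi ν) - (∫ x, f x ∂(Measure.pi ν))^2 ≤ n * c^2 := by
  intro n
  induction n with
  | zero =>
    intro ν hν f hf B hB c hc hosc
    haveI := hν
    have hconst : f = fun _ => f default := by
      funext x; rw [Subsingleton.elim x default]
    haveI : IsProbabilityMeasure (Measure.pi ν) := by infer_instance
    rw [hconst]
    simp
  | succ n IH =>
    intro ν hν f hf B hB c hc hosc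
    haveI := hν
    set ν' : Fin n → Measure ℂ := fun j => ν ((0 : Fin (n+1)).succAbove j) with hν'def
    haveI hν'P : ∀ j, IsProbabilityMeasure (ν' j) := fun j => hν _
    haveI : IsProbabilityMeasure (Measure.pi ν') := by infer_instance
    haveI : IsProbabilityMeasure (ν 0) := hν 0
    haveI : IsProbabilityMeasure ((ν 0).prod (Measure.pi ν')) := by infer_instance
    set e := MeasurableEquiv.piFinSuccAbove (fun _ : Fin (n+1) => ℂ) 0 with he
    have hmp : MeasurePreserving e (Measure.pi ν) ((ν 0).prod (Measure.pi ν')) :=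
      measurePreserving_piFinSuccAbove ν 0
    set h : ℂ × (Fin n → ℂ) → ℝ := fun p => f (Fin.cons p.1 (fun j => p.2 j)) with hhdef
    have hcons_meas : Measurable (fun p : ℂ × (Fin n → ℂ) =>
        (Fin.cons p.1 (fun j => p.2 j) : Fin (n+1) → ℂ)) := by
      apply measurable_pi_iff.2
      intro i
      refine Fin.cases ?_ ?_ i
      · simpa using measurable_fst
      · intro j; simp; exact (measurable_pi_apply j).comp measurable_snd
    have hh_meas : Measurable h := hf.comp hcons_meas
    have hh_bdd : ∀ p, |h p| ≤ B := fun p => hB _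
    have hcomp : ∀ x : Fin (n+1) → ℂ, h (e x) = f x := by
      intro x
      show f (Fin.cons (x 0) (fun j => x ((0 : Fin (n+1)).succAbove j))) = f x
      congr 1
      simp only [Fin.succAbove_zero]
      exact Fin.cons_self_tail x
    -- transfer integrals
    have hint_f : ∫ x, f x ∂(Measure.pi ν) = ∫ p, h p ∂((ν 0).prod (Measure.pi ν')) := by
      rw [← hmp.integral_comp e.measurableEmbedding h]
      congr 1; funext x; rw [hcomp]
    have hint_f2 : ∫ x, (f x)^2 ∂(Measure.pi ν)
        = ∫ p, (h p)^2 ∂((ν 0).prod (Measure.pi ν')) := by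
      rw [← hmp.integral_comp e.measurableEmbedding (fun p => (h p)^2)]
      congr 1; funext x; rw [hcomp]
    have hB0 : 0 ≤ B := le_trans (abs_nonneg _) (hB default)
    have hint_h : Integrable h ((ν 0).prod (Measure.pi ν')) :=
      integrable_of_bdd _ hh_meas B hh_bdd
    have hh2_bdd : ∀ p, |(h p)^2| ≤ B^2 := by
      intro p; rw [abs_pow]; exact pow_le_pow_left₀ (abs_nonneg _) (hh_bdd p) 2
    have hint_h2 : Integrable (fun p => (h p)^2) ((ν 0).prod (Measure.pi ν')) :=
      integrable_of_bdd _ (hh_meas.pow_const 2) (B^2) hh2_bdd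
    set g : ℂ → ℝ := fun a => ∫ y, h (a, y) ∂(Measure.pi ν') with hgdef
    set φ : ℂ → ℝ := fun a => ∫ y, (h (a, y))^2 ∂(Measure.pi ν') with hφdef
    have hg_meas : Measurable g :=
      (hh_meas.stronglyMeasurable.integral_prod_right').measurable
    have hφ_meas : Measurable φ :=
      ((hh_meas.pow_const 2).stronglyMeasurable.integral_prod_right').measurable
    have hg_bdd : ∀ a, |g a| ≤ B := by
      intro a
      rw [← Real.norm_eq_abs]
      calc ‖∫ y, h (a, y) ∂(Measure.pi ν')‖ ≤ B * ((Measure.pi ν') Set.univ).toReal :=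
            norm_integral_le_of_norm_le_const
              (Filter.Eventually.of_forall (fun y => by simpa using hh_bdd (a, y)))
        _ = B := by simp
    have hφ_bdd : ∀ a, |φ a| ≤ B^2 := by
      intro a
      rw [← Real.norm_eq_abs]
      calc ‖∫ y, (h (a, y))^2 ∂(Measure.pi ν')‖ ≤ B^2 * ((Measure.pi ν') Set.univ).toReal :=
            norm_integral_le_of_norm_le_const
              (Filter.Eventually.of_forall (fun y => by simpa using hh2_bdd (a, y)))
        _ = B^2 := by simp
    have hint_g : Integrable g (ν 0) := integrable_of_bdd _ hg_meas B hg_bdd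
    have hint_g2 : Integrable (fun a => (g a)^2) (ν 0) := by
      refine integrable_of_bdd _ (hg_meas.pow_const 2) (B^2) (fun a => ?_)
      rw [abs_pow]; exact pow_le_pow_left₀ (abs_nonneg _) (hg_bdd a) 2
    have hint_φ : Integrable φ (ν 0) := integrable_of_bdd _ hφ_meas (B^2) hφ_bdd
    -- Fubini
    have hFub1 : ∫ p, h p ∂((ν 0).prod (Measure.pi ν')) = ∫ a, g a ∂(ν 0) :=
      integral_prod h hint_h
    have hFub2 : ∫ p, (h p)^2 ∂((ν 0).prod (Measure.pi ν')) = ∫ a, φ a ∂(ν 0) :=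
      integral_prod _ hint_h2
    -- IH for each slice
    have hIH : ∀ a : ℂ, φ a - (g a)^2 ≤ n * c^2 := by
      intro a
      have hcons_a : Measurable (fun y : Fin n → ℂ => (Fin.cons a y : Fin (n+1) → ℂ)) := by
        apply measurable_pi_iff.2
        intro i
        refine Fin.cases ?_ ?_ i
        · simpa using measurable_const
        · intro j; simpa using measurable_pi_apply j
      have := IH ν' hν'P (fun y => f (Fin.cons a y)) (hf.comp hcons_a) B (fun y => hB _) c hc ?_
      · exact this
      · intro y i a' b'
        show |f (Fin.cons a (Function.update y i a')) - f (Fin.cons a (Function.update y i b'))| ≤ c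
        rw [Fin.cons_update, Fin.cons_update]
        exact hosc _ _ _ _
    -- oscillation of g
    have hg_osc : ∀ a a' : ℂ, |g a - g a'| ≤ c := by
      intro a a'
      have hi1 : Integrable (fun y => h (a, y)) (Measure.pi ν') :=
        integrable_of_bdd _ (hh_meas.comp (measurable_const.prodMk measurable_id)) B
          (fun y => hh_bdd _)
      have hi2 : Integrable (fun y => h (a', y)) (Measure.pi ν') :=
        integrable_of_bdd _ (hh_meas.comp (measurable_const.prodMk measurable_id)) B
          (fun y => hh_bdd _)
      have : g a - g a' = ∫ y, (h (a, y) - h (a', y)) ∂(Measure.pi ν') :=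
        (integral_sub hi1 hi2).symm
      rw [this, ← Real.norm_eq_abs]
      calc ‖∫ y, (h (a, y) - h (a', y)) ∂(Measure.pi ν')‖
          ≤ c * ((Measure.pi ν') Set.univ).toReal := by
            apply norm_integral_le_of_norm_le_const
            apply Filter.Eventually.of_forall
            intro y
            have e1 : (Fin.cons a y : Fin (n+1) → ℂ)
                = Function.update (Fin.cons a' y) 0 a := (Fin.update_cons_zero _ _ _).symm
            have e2 : (Fin.cons a' y : Fin (n+1) → ℂ)
                = Function.update (Fin.cons a' y) 0 a' := (Fin.update_cons_zero _ _ _).symm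
            show ‖f (Fin.cons a fun j => y j) - f (Fin.cons a' fun j => y j)‖ ≤ c
            simp only [Real.norm_eq_abs]
            calc |f (Fin.cons a fun j => y j) - f (Fin.cons a' fun j => y j)|
                = |f (Function.update (Fin.cons a' y) 0 a)
                    - f (Function.update (Fin.cons a' y) 0 a')| := by rw [← e1, ← e2]
              _ ≤ c := hosc _ _ _ _
        _ = c := by simp
    -- variance of g at most c^2
    have hvar_g : ∫ a, (g a)^2 ∂(ν 0) - (∫ a, g a ∂(ν 0))^2 ≤ c^2 := by
      set t := g 0 with htdef
      have hint_sq : Integrable (fun a => (g a - t)^2) (ν 0) := by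
        refine integrable_of_bdd _ ((hg_meas.sub measurable_const).pow_const 2) (c^2) (fun a => ?_)
        rw [abs_pow]
        exact pow_le_pow_left₀ (abs_nonneg _) (hg_osc a 0) 2
      have hexp : ∫ a, (g a - t)^2 ∂(ν 0)
          = ∫ a, (g a)^2 ∂(ν 0) - 2 * t * (∫ a, g a ∂(ν 0)) + t^2 := by
        have : (fun a => (g a - t)^2) = fun a => (g a)^2 - 2 * t * g a + t^2 := by
          funext a; ring
        rw [this, integral_add (by exact (hint_g2.sub (hint_g.const_mul (2*t))) ) (integrable_const _),
          integral_sub hint_g2 (hint_g.const_mul (2*t)), integral_const_mul]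
        simp
      have hle : ∫ a, (g a - t)^2 ∂(ν 0) ≤ c^2 := by
        calc ∫ a, (g a - t)^2 ∂(ν 0) ≤ ∫ _a, c^2 ∂(ν 0) := by
              apply integral_mono hint_sq (integrable_const _)
              intro a
              exact sq_le_sq' (by linarith [abs_le.1 (hg_osc a 0)]) (by linarith [abs_le.1 (hg_osc a 0)])
          _ = c^2 := by simp
      nlinarith [sq_nonneg ((∫ a, g a ∂(ν 0)) - t)]
    -- assemble
    have hsplit : ∫ a, (φ a - (g a)^2) ∂(ν 0) ≤ n * c^2 := by
      calc ∫ a, (φ a - (g a)^2) ∂(ν 0) ≤ ∫ _a, (n : ℝ) * c^2 ∂(ν 0) :=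
            integral_mono (hint_φ.sub hint_g2) (integrable_const _) hIH
        _ = n * c^2 := by simp
    have hsub : ∫ a, (φ a - (g a)^2) ∂(ν 0)
        = ∫ a, φ a ∂(ν 0) - ∫ a, (g a)^2 ∂(ν 0) := integral_sub hint_φ hint_g2
    rw [hint_f2, hint_f, hFub1, hFub2]
    push_cast
    nlinarith [hsplit, hvar_g, hsub]

lemma map_eq_pi {Ω : Type*} [MeasurableSpace Ω] (μ : Measure Ω) [IsProbabilityMeasure μ]
    (n : ℕ) (Y : Fin n → Ω → ℂ) (hmeas : ∀ j, Measurable (Y j))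
    (hindep : ProbabilityTheory.iIndepFun Y μ) :
    μ.map (fun ω j => Y j ω) = Measure.pi (fun j => μ.map (Y j)) := by
  haveI : ∀ j, IsProbabilityMeasure (μ.map (Y j)) :=
    fun j => Measure.isProbabilityMeasure_map (hmeas j).aemeasurable
  have hJ : Measurable (fun ω (j : Fin n) => Y j ω) :=
    measurable_pi_iff.2 fun j => hmeas j
  symm
  apply Measure.pi_eq
  intro s hs
  rw [Measure.map_apply hJ (MeasurableSet.univ_pi hs)]
  have hpre : (fun ω (j : Fin n) => Y j ω) ⁻¹' (Set.pi Set.univ s)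
      = ⋂ j ∈ Finset.univ, Y j ⁻¹' s j := by
    ext ω; simp [Set.mem_pi]
  rw [hpre, hindep.measure_inter_preimage_eq_mul Finset.univ (fun i _ => hs i)]
  congr 1
  funext j
  rw [Measure.map_apply (hmeas j) (hs j)]

lemma cheb_aux {Ω : Type*} [MeasurableSpace Ω] (μ : Measure Ω) [IsProbabilityMeasure μ]
    (G : Ω → ℝ) (hG : Measurable G) (B : ℝ) (hGb : ∀ ω, |G ω| ≤ B)
    (A : Set Ω) (hA : MeasurableSet A) (hhalf : 1/2 ≤ (μ A).toReal)
    (hdev : ∀ ω ∈ A, 64 ≤ (G ω - ∫ ω', G ω' ∂μ)^2)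
    (hvar : ∫ ω, (G ω)^2 ∂μ - (∫ ω, G ω ∂μ)^2 ≤ 4) : False := by
  set M := ∫ ω', G ω' ∂μ with hM
  have hintG : Integrable G μ := integrable_of_bdd μ hG B hGb
  have hintG2 : Integrable (fun ω => (G ω)^2) μ := by
    refine integrable_of_bdd μ (hG.pow_const 2) (B^2) (fun ω => ?_)
    rw [abs_pow]; exact pow_le_pow_left₀ (abs_nonneg _) (hGb ω) 2
  have hintdev : Integrable (fun ω => (G ω - M)^2) μ := by
    refine integrable_of_bdd μ ((hG.sub measurable_const).pow_const 2) ((B + |M|)^2)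
      (fun ω => ?_)
    rw [abs_pow]
    apply pow_le_pow_left₀ (abs_nonneg _)
    calc |G ω - M| ≤ |G ω| + |M| := abs_sub _ _
      _ ≤ B + |M| := by linarith [hGb ω]
  have hexp : ∫ ω, (G ω - M)^2 ∂μ = ∫ ω, (G ω)^2 ∂μ - M^2 := by
    have heq : (fun ω => (G ω - M)^2) = fun ω => (G ω)^2 - 2 * M * G ω + M^2 := by
      funext ω; ring
    rw [heq]
    have ha : Integrable (fun ω => G ω ^ 2 - 2 * M * G ω) μ :=
      hintG2.sub (hintG.const_mul (2*M))
    rw [integral_add ha (integrable_const _),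
      integral_sub hintG2 (hintG.const_mul (2*M)), integral_const_mul]
    simp only [integral_const, measure_univ, ENNReal.toReal_one, probReal_univ, one_smul, smul_eq_mul]
    rw [← hM]
    ring
  have h1 : 64 * (μ A).toReal ≤ ∫ ω in A, (G ω - M)^2 ∂μ := by
    have : ∫ _ω in A, (64:ℝ) ∂μ ≤ ∫ ω in A, (G ω - M)^2 ∂μ := by
      apply setIntegral_mono_on (integrableOn_const (measure_ne_top μ A))
        hintdev.integrableOn hA
      intro ω hω; exact hdev ω hω
    simpa [Measure.restrict_apply_univ, mul_comm, Measure.real] using this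
  have h2 : ∫ ω in A, (G ω - M)^2 ∂μ ≤ ∫ ω, (G ω - M)^2 ∂μ := by
    apply setIntegral_le_integral hintdev
    exact Filter.Eventually.of_forall (fun ω => sq_nonneg _)
  have h3 : ∫ ω, (G ω - M)^2 ∂μ ≤ 4 := by rw [hexp]; linarith
  have : (64:ℝ) * (1/2) ≤ 4 := by
    calc (64:ℝ) * (1/2) ≤ 64 * (μ A).toReal := by linarith
      _ ≤ 4 := le_trans h1 (le_trans h2 h3)
  linarith


theorem stmt_12 {Ω : Type*} [MeasurableSpace Ω] (μ : Measure Ω) [IsProbabilityMeasure μ]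
    (n : ℕ) (hn : 0 < n) (T : ℝ) (hT : 0 < T)
    (X : Fin n → Ω → ℂ) (hmeas : ∀ j, Measurable (X j))
    (hindep : ProbabilityTheory.iIndepFun X μ)
    (hident : ∀ i j, Measure.map (X i) μ = Measure.map (X j) μ)
    (hunit : ∀ j, ∀ᵐ ω ∂μ, ‖X j ω‖ = 1)
    (m : ℝ)
    (hm₁ : (1 : ℝ) / 2 ≤ (μ {ω | crest n T (fun j => X j ω) ≤ m}).toReal)
    (hm₂ : (1 : ℝ) / 2 ≤ (μ {ω | m ≤ crest n T (fun j => X j ω)}).toReal) :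
    |(∫ ω, crest n T (fun j => X j ω) ∂μ) - m| ≤ 8 * Real.sqrt Real.pi := by
  classical
  set F : Ω → ℝ := fun ω => crest n T (fun j => X j ω) with hFdef
  set ρ : ℂ → ℂ := fun z => if ‖z‖ = 1 then z else 1 with hρdef
  have hρmeas : Measurable ρ :=
    Measurable.ite (measurableSet_eq_fun measurable_norm measurable_const)
      measurable_id measurable_const
  have hρnorm : ∀ z, ‖ρ z‖ = 1 := by
    intro z
    by_cases h : ‖z‖ = 1
    · show ‖if ‖z‖ = 1 then z else 1‖ = 1
      rw [if_pos h]; exact h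
    · show ‖if ‖z‖ = 1 then z else 1‖ = 1
      rw [if_neg h]; simp
  have hρid : ∀ z, ‖z‖ = 1 → ρ z = z := by
    intro z h
    show (if ‖z‖ = 1 then z else 1) = z
    rw [if_pos h]
  have hρρ : ∀ z, ρ (ρ z) = ρ z := fun z => hρid _ (hρnorm z)
  set Y : Fin n → Ω → ℂ := fun j => ρ ∘ X j with hYdef
  have hYmeas : ∀ j, Measurable (Y j) := fun j => hρmeas.comp (hmeas j)
  have hYindep : ProbabilityTheory.iIndepFun Y μ :=
    hindep.comp (fun _ => ρ) (fun _ => hρmeas)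
  set ν : Fin n → Measure ℂ := fun j => μ.map (Y j) with hνdef
  haveI hνP : ∀ j, IsProbabilityMeasure (ν j) :=
    fun j => Measure.isProbabilityMeasure_map (hYmeas j).aemeasurable
  have hmap : μ.map (fun ω j => Y j ω) = Measure.pi ν := map_eq_pi μ n Y hYmeas hYindep
  set J : Ω → (Fin n → ℂ) := fun ω j => Y j ω with hJdef
  have hJmeas : Measurable J := measurable_pi_iff.2 fun j => hYmeas j
  set g : (Fin n → ℂ) → ℝ := fun x => crest n T (fun j => ρ (x j)) with hgdef
  have hgmeas : Measurable g :=
    (crest_continuous n T).measurable.comp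
      (measurable_pi_iff.2 fun j => hρmeas.comp (measurable_pi_apply j))
  have hn' : (0:ℝ) < n := by exact_mod_cast hn
  have hsn : 0 < Real.sqrt n := Real.sqrt_pos.2 hn'
  have hss : Real.sqrt n * Real.sqrt n = (n:ℝ) := Real.mul_self_sqrt (le_of_lt hn')
  have hg_bdd : ∀ x, |g x| ≤ Real.sqrt n := by
    intro x
    rw [abs_of_nonneg (crest_nonneg n T _)]
    calc crest n T (fun j => ρ (x j)) ≤ (Real.sqrt n)⁻¹ * ∑ i : Fin n, ‖ρ (x i)‖ :=
          crest_le n T _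
      _ = (Real.sqrt n)⁻¹ * n := by simp [hρnorm]
      _ = Real.sqrt n := by
          rw [inv_mul_eq_div, div_eq_iff hsn.ne']; exact hss.symm
  have hg_osc : ∀ (x : Fin n → ℂ) (i : Fin n) (a b : ℂ),
      |g (Function.update x i a) - g (Function.update x i b)| ≤ 2 * (Real.sqrt n)⁻¹ := by
    intro x i a b
    refine le_trans (crest_lipschitz n T _ _) ?_
    have hsum : ∑ j : Fin n, ‖ρ (Function.update x i a j) - ρ (Function.update x i b j)‖
        = ‖ρ a - ρ b‖ := by
      rw [Finset.sum_eq_single i]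
      · rw [Function.update_self, Function.update_self]
      · intro j _ hj
        rw [Function.update_of_ne hj, Function.update_of_ne hj, sub_self, norm_zero]
      · intro hi; exact absurd (Finset.mem_univ i) hi
    rw [hsum]
    have : ‖ρ a - ρ b‖ ≤ 2 := by
      calc ‖ρ a - ρ b‖ ≤ ‖ρ a‖ + ‖ρ b‖ := norm_sub_le _ _
        _ = 2 := by rw [hρnorm, hρnorm]; norm_num
    calc (Real.sqrt n)⁻¹ * ‖ρ a - ρ b‖ ≤ (Real.sqrt n)⁻¹ * 2 := by
          apply mul_le_mul_of_nonneg_left this (by positivity)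
      _ = 2 * (Real.sqrt n)⁻¹ := by ring
  have hvar_pi := pi_var_le n ν hνP g hgmeas (Real.sqrt n) hg_bdd
    (2 * (Real.sqrt n)⁻¹) (by positivity) hg_osc
  have hc2 : (n:ℝ) * (2 * (Real.sqrt n)⁻¹)^2 = 4 := by
    have h0 : ((Real.sqrt n)⁻¹)^2 = ((n:ℝ))⁻¹ := by
      rw [pow_two, ← mul_inv, hss]
    calc (n:ℝ) * (2 * (Real.sqrt n)⁻¹)^2 = (n:ℝ) * ((n:ℝ))⁻¹ * 4 := by
          rw [mul_pow, h0]; ring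
      _ = 4 := by rw [mul_inv_cancel₀ hn'.ne', one_mul]
  rw [hc2] at hvar_pi
  set G : Ω → ℝ := fun ω => g (J ω) with hGdef
  have hGmeas : Measurable G := hgmeas.comp hJmeas
  have hG_bdd : ∀ ω, |G ω| ≤ Real.sqrt n := fun ω => hg_bdd _
  have htr1 : ∫ x, g x ∂(Measure.pi ν) = ∫ ω, G ω ∂μ := by
    rw [← hmap, integral_map hJmeas.aemeasurable hgmeas.aestronglyMeasurable]
  have htr2 : ∫ x, (g x)^2 ∂(Measure.pi ν) = ∫ ω, (G ω)^2 ∂μ := by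
    rw [← hmap, integral_map hJmeas.aemeasurable (hgmeas.pow_const 2).aestronglyMeasurable]
  rw [htr1, htr2] at hvar_pi
  have hae : ∀ᵐ ω ∂μ, F ω = G ω := by
    have h1 : ∀ᵐ ω ∂μ, ∀ j, ‖X j ω‖ = 1 := (MeasureTheory.ae_all_iff).2 hunit
    filter_upwards [h1] with ω hω
    show crest n T (fun j => X j ω) = g (J ω)
    have : (fun j => ρ (J ω j)) = fun j => X j ω := by
      funext j
      show ρ (ρ (X j ω)) = X j ω
      rw [hρρ, hρid _ (hω j)]
    show crest n T (fun j => X j ω) = crest n T (fun j => ρ (J ω j))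
    rw [this]
  have hint : ∫ ω, F ω ∂μ = ∫ ω, G ω ∂μ := integral_congr_ae hae
  have hsqrtpi : (1:ℝ) ≤ Real.sqrt Real.pi := by
    rw [show (1:ℝ) = Real.sqrt 1 by simp]
    exact Real.sqrt_le_sqrt (by linarith [Real.pi_gt_three])
  have key : |(∫ ω, F ω ∂μ) - m| ≤ 8 := by
    by_contra hcon
    push_neg at hcon
    rcases lt_abs.1 hcon with hcase | hcase
    · -- ∫ F - m > 8, i.e. m < M - 8 : use A = {F ≤ m}
      rw [hint] at hcase
      set A : Set Ω := {ω | G ω ≤ m} with hAdef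
      have hsete : {ω | F ω ≤ m} =ᵐ[μ] A :=
        hae.mono (fun ω h => by show (F ω ≤ m) = (G ω ≤ m); rw [h])
      have hhalf : 1/2 ≤ (μ A).toReal := by
        rw [← measure_congr hsete]; exact hm₁
      refine cheb_aux μ G hGmeas (Real.sqrt n) hG_bdd A
        (measurableSet_le hGmeas measurable_const) hhalf ?_ hvar_pi
      intro ω hω
      have h1 : G ω ≤ m := hω
      nlinarith
    · -- m - ∫ F > 8 : use A = {m ≤ F}
      rw [hint] at hcase
      set A : Set Ω := {ω | m ≤ G ω} with hAdef
      have hsete : {ω | m ≤ F ω} =ᵐ[μ] A :=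
        hae.mono (fun ω h => by show (m ≤ F ω) = (m ≤ G ω); rw [h])
      have hhalf : 1/2 ≤ (μ A).toReal := by
        rw [← measure_congr hsete]; exact hm₂
      refine cheb_aux μ G hGmeas (Real.sqrt n) hG_bdd A
        (measurableSet_le measurable_const hGmeas) hhalf ?_ hvar_pi
      intro ω hω
      have h1 : m ≤ G ω := hω
      nlinarith
  calc |(∫ ω, F ω ∂μ) - m| ≤ 8 := key
    _ ≤ 8 * Real.sqrt Real.pi := by nlinarith
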